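/- The free group F₂ on two generators is residually finite. -/

import Mathlib

namespace RFAux

variable {α : Type*} [DecidableEq α] (L : List (α × Bool))

/-- Domain predicate for the partial shift associated to generator `a` and sign `b`. -/
def D (a : α) (b : Bool) (i : Fin (L.length + 1)) : Prop :=
  (0 < i.val ∧ L[i.val - 1]? = some (a, b)) ∨ L[i.val]? = some (a, !b)

instance (a : α) (b : Bool) (i : Fin (L.length + 1)) : Decidable (D L a b i) := by
  unfold D; infer_instance

/-- The partial shift: moves `i` to `i-1` if letter `i-1` is `(a, b)`, to `i+1` if
letter `i` is `(a, !b)`, identity otherwise. -/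
def F (a : α) (b : Bool) (i : Fin (L.length + 1)) : Fin (L.length + 1) :=
  if 0 < i.val ∧ L[i.val - 1]? = some (a, b) then
    ⟨i.val - 1, by omega⟩
  else if h : L[i.val]? = some (a, !b) then
    ⟨i.val + 1, by
      have := (List.getElem?_eq_some_iff.mp h).1
      omega⟩
  else i

lemma memD (a : α) (b : Bool) (i : Fin (L.length + 1)) (h : D L a b i) :
    D L a (!b) (F L a b i) := by
  unfold F
  by_cases h1 : 0 < i.val ∧ L[i.val - 1]? = some (a, b)
  · rw [if_pos h1]
    exact Or.inr (by simpa using h1.2)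
  · rw [if_neg h1]
    have h2 : L[i.val]? = some (a, !b) := h.resolve_left h1
    rw [dif_pos h2]
    exact Or.inl ⟨Nat.succ_pos _, by simpa using h2⟩

variable (hred : ∀ (i : ℕ) (x : α) (c : Bool),
    ¬(L[i]? = some (x, c) ∧ L[i + 1]? = some (x, !c)))

include hred in
lemma invF (a : α) (b : Bool) (i : Fin (L.length + 1)) (h : D L a b i) :
    F L a (!b) (F L a b i) = i := by
  unfold F
  by_cases h1 : 0 < i.val ∧ L[i.val - 1]? = some (a, b)
  · rw [if_pos h1]
    have hc1 : ¬(0 < i.val - 1 ∧ L[i.val - 1 - 1]? = some (a, !b)) := by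
      rintro ⟨hp, hq⟩
      exact hred (i.val - 1 - 1) a (!b) ⟨hq, by
        have : i.val - 1 - 1 + 1 = i.val - 1 := by omega
        rw [this]
        simpa using h1.2⟩
    rw [if_neg hc1]
    have h2 : L[i.val - 1]? = some (a, !!b) := by simpa using h1.2
    rw [dif_pos h2]
    exact Fin.ext (by simp; omega)
  · rw [if_neg h1]
    have h2 : L[i.val]? = some (a, !b) := h.resolve_left h1
    rw [dif_pos h2]
    have hc1 : 0 < i.val + 1 ∧ L[i.val + 1 - 1]? = some (a, !b) := ⟨Nat.succ_pos _, by simpa using h2⟩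
    rw [if_pos hc1]
    exact Fin.ext (by simp)

/-- The permutation associated to the generator `a`. -/
noncomputable def sigma (a : α) : Equiv.Perm (Fin (L.length + 1)) :=
  Equiv.extendSubtype
    ({ toFun := fun x => ⟨F L a true x, by simpa using memD L a true x x.2⟩
       invFun := fun x => ⟨F L a false x, by simpa using memD L a false x x.2⟩
       left_inv := fun x => by
         apply Subtype.ext
         simpa using invF L hred a true x x.2
       right_inv := fun x => by
         apply Subtype.ext
         simpa using invF L hred a false x x.2 } :
      { x : Fin (L.length + 1) // D L a true x } ≃ { x // D L a false x })

lemma sigma_apply_true (a : α) (m : ℕ) (hm : L[m]? = some (a, true))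
    (h1 : m + 1 < L.length + 1) :
    sigma L hred a ⟨m + 1, h1⟩ = ⟨m, by omega⟩ := by
  have hmem : D L a true ⟨m + 1, h1⟩ := Or.inl ⟨Nat.succ_pos _, by simpa using hm⟩
  rw [sigma, Equiv.extendSubtype_apply_of_mem _ _ hmem]
  show F L a true ⟨m + 1, h1⟩ = _
  unfold F
  rw [if_pos ⟨Nat.succ_pos _, by simpa using hm⟩]
  exact Fin.ext (by simp)

lemma sigma_apply_false (a : α) (m : ℕ) (hm : L[m]? = some (a, false))
    (h1 : m + 1 < L.length + 1) :
    sigma L hred a ⟨m, by omega⟩ = ⟨m + 1, h1⟩ := by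
  have h2 : L[(⟨m, by omega⟩ : Fin (L.length + 1)).val]? = some (a, !true) := by simpa using hm
  have hmem : D L a true ⟨m, by omega⟩ := Or.inr h2
  rw [sigma, Equiv.extendSubtype_apply_of_mem _ _ hmem]
  show F L a true ⟨m, _⟩ = _
  unfold F
  have hc1 : ¬(0 < m ∧ L[m - 1]? = some (a, true)) := by
    rintro ⟨hp, hq⟩
    exact hred (m - 1) a true ⟨hq, by
      have : m - 1 + 1 = m := by omega
      rw [this]; simpa using hm⟩
  rw [if_neg (by simpa using hc1), dif_pos h2]

/-- Main computation: applying the image of the word moves `L.length` down to `j`. -/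
lemma prod_drop_apply : ∀ (d j : ℕ) (_h : j + d = L.length),
    ((L.drop j).map fun x => cond x.2 (sigma L hred x.1) (sigma L hred x.1)⁻¹).prod
      ⟨L.length, Nat.lt_succ_self _⟩ = ⟨j, by omega⟩ := by
  intro d
  induction d with
  | zero =>
    intro j hj
    have hj' : j = L.length := by omega
    subst hj'
    simp [List.drop_length]
  | succ d ih =>
    intro j hj
    have hm : j < L.length := by omega
    rw [List.drop_eq_getElem_cons hm, List.map_cons, List.prod_cons]
    simp only [Equiv.Perm.mul_apply]
    rw [ih (j + 1) (by omega)]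
    have hLj : L[j]? = some L[j] := List.getElem?_eq_some_iff.mpr ⟨hm, rfl⟩
    cases hb : L[j].2 with
    | false =>
      have hm' : L[j]? = some (L[j].1, false) := by rw [hLj, ← hb]
      have hstep := sigma_apply_false L hred L[j].1 j hm' (by omega)
      simp only [cond_false]
      exact Equiv.Perm.inv_eq_iff_eq.mpr hstep.symm
    | true =>
      have hm' : L[j]? = some (L[j].1, true) := by rw [hLj, ← hb]
      simp only [cond_true]
      exact sigma_apply_true L hred L[j].1 j hm' (by omega)

end RFAux

def ResiduallyFinite (G : Type*) [Group G] : Prop :=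
  ∀ g : G, g ≠ 1 → ∃ H : Subgroup G, H.Normal ∧ H.FiniteIndex ∧ g ∉ H

/-- The free group on two generators is residually finite. -/
theorem freeGroup_two_residuallyFinite :
    ResiduallyFinite (FreeGroup (Fin 2)) := by
  intro g hg
  set L := g.toWord with hLdef
  have hred : ∀ (i : ℕ) (x : Fin 2) (c : Bool),
      ¬(L[i]? = some (x, c) ∧ L[i + 1]? = some (x, !c)) := by
    rintro i x c ⟨h1, h2⟩
    obtain ⟨hi1, he1⟩ := List.getElem?_eq_some_iff.mp h1
    obtain ⟨hi2, he2⟩ := List.getElem?_eq_some_iff.mp h2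
    have hdecomp : L = L.take i ++ (x, c) :: (x, !c) :: L.drop (i + 2) := by
      conv_lhs => rw [← List.take_append_drop i L]
      congr 1
      rw [List.drop_eq_getElem_cons hi1, he1, List.drop_eq_getElem_cons hi2, he2]
    have : FreeGroup.reduce L = L := by
      rw [hLdef]
      show FreeGroup.reduce g.toWord = g.toWord
      exact FreeGroup.reduce_toWord g
    rw [hdecomp] at this
    exact FreeGroup.reduce.not this
  have hL1 : L.length ≠ 0 := by
    intro h
    exact hg (FreeGroup.toWord_eq_nil_iff.mp (List.eq_nil_of_length_eq_zero h))
  set φ : FreeGroup (Fin 2) →* Equiv.Perm (Fin (L.length + 1)) :=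
    FreeGroup.lift (RFAux.sigma L hred)
  refine ⟨φ.ker, MonoidHom.normal_ker φ, Subgroup.finiteIndex_ker φ, ?_⟩
  intro hmem
  have hφ : φ g = 1 := hmem
  have hg' : φ g = ((L.map fun x => cond x.2 (RFAux.sigma L hred x.1)
      (RFAux.sigma L hred x.1)⁻¹)).prod := by
    conv_lhs => rw [← FreeGroup.mk_toWord (x := g)]
    exact FreeGroup.lift_mk
  have hkey := RFAux.prod_drop_apply L hred L.length 0 (by omega)
  rw [List.drop_zero] at hkey
  rw [← hg', hφ] at hkey
  have : (0 : ℕ) = L.length := by simpa [Fin.ext_iff] using hkey.symm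
  omega
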